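/- Let N, p, n be positive integers with N²p ≥ 2, ε ∈ (0,1/2), L_f > 0, and let f : ℝ → [ε, 1−ε] be differentiable with |f'(u)| ≤ L_f for all u. Let (Ω, F, P) be a probability space with a filtration (F_t)_{t=0}^{n}, and let x^t : Ω → {0,1}^N for t = −p+1, …, n be random vectors such that x^t is F_0-measurable for t ≤ 0, x^t is F_t-measurable for 1 ≤ t ≤ n, and for every t ∈ {1,…,n} and i ∈ {1,…,N}, E[x_i^t | F_{t−1}] = z_i^t almost surely, where z_i^t := f( Σ_{j=1}^N Σ_{ℓ=1}^p Θ*_{ijℓ} x_j^{t−ℓ} ) for a fixed tensor Θ* ∈ ℝ^{N×N×p}. Define G_{ijℓ} := (1/n) Σ_{t=1}^n ( (1−x_i^t)/(1−z_i^t) − x_i^t/z_i^t ) · f'( Σ_{j',ℓ'} Θ*_{ij'ℓ'} x_{j'}^{t−ℓ'} ) · x_j^{t−ℓ} (the (i,j,ℓ) entry of the gradient of the negative log-likelihood at Θ*). Then for every constant c₁ > 2, with probability at least 1 − 2(N²p)^{−(c₁/2−1)}: max_{i,j∈[N], ℓ∈[p]} |G_{ijℓ}| ≤ (L_f/ε)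 · √(c₁ · log(N²p)/n). -/

import Mathlib

open Finset MeasureTheory Real ProbabilityTheory
open scoped ENNReal

lemma my_chord {c d l : ℝ} (hc : 0 < c) (hd : |d| ≤ c) :
    Real.exp (l * d) ≤ Real.cosh (l * c) + (d / c) * Real.sinh (l * c) := by
  rw [abs_le] at hd
  set θ : ℝ := (c + d) / (2 * c) with hθdef
  have h0 : 0 ≤ θ := by apply div_nonneg; linarith; positivity
  have h1 : θ ≤ 1 := by rw [hθdef, div_le_one (by positivity)]; linarith
  have hb : (0:ℝ) ≤ 1 - θ := by linarith
  have hab : θ + (1 - θ) = 1 := by ring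
  have key := convexOn_exp.2 (Set.mem_univ (l * c)) (Set.mem_univ (-(l * c))) h0 hb hab
  simp only [smul_eq_mul] at key
  calc Real.exp (l * d) = Real.exp (θ * (l*c) + (1 - θ) * (-(l*c))) := by
        congr 1; rw [hθdef]; field_simp; ring
    _ ≤ θ * Real.exp (l*c) + (1 - θ) * Real.exp (-(l*c)) := key
    _ = Real.cosh (l * c) + (d / c) * Real.sinh (l * c) := by
        rw [Real.cosh_eq, Real.sinh_eq, hθdef]; field_simp; ring


lemma my_reindex {M : Type*} [AddCommMonoid M] (n : ℕ) (g : ℤ → M) :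
    ∑ s ∈ Finset.Icc (1:ℤ) (n:ℤ), g s = ∑ t ∈ Finset.range n, g ((t:ℤ)+1) := by
  refine Finset.sum_nbij' (fun s => (s-1).toNat) (fun t => (t:ℤ)+1) ?_ ?_ ?_ ?_ ?_
  · intro a ha; simp only [Finset.mem_Icc] at ha; simp only [Finset.mem_range]; omega
  · intro a ha; simp only [Finset.mem_range] at ha; simp only [Finset.mem_Icc]; omega
  · intro a ha; simp only [Finset.mem_Icc] at ha; omega
  · intro a ha; simp only [Finset.mem_range] at ha; omega
  · intro a ha; simp only [Finset.mem_Icc] at ha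
    congr 1; omega


section
variable {Ω : Type*} [m0 : MeasurableSpace Ω] (P : Measure Ω) [IsProbabilityMeasure P]
variable {Ω : Type*} [m0 : MeasurableSpace Ω] (P : Measure Ω) [IsProbabilityMeasure P]

lemma my_int_of_bdd {f : Ω → ℝ} (hm : Measurable f) {C : ℝ}
    (hb : ∀ ω, |f ω| ≤ C) : Integrable f P :=
  ⟨hm.aestronglyMeasurable,
    MeasureTheory.HasFiniteIntegral.of_bounded (C := C) (Filter.Eventually.of_forall hb)⟩

lemma my_mgf_bound (ℱ : ℕ → MeasurableSpace Ω) (hmono : Monotone ℱ) (hle : ∀ t, ℱ t ≤ m0)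
    (n : ℕ) (d : ℕ → Ω → ℝ) (c : ℝ) (hc : 0 < c)
    (hmeas : ∀ t < n, Measurable[ℱ (t+1)] (d t))
    (hbdd : ∀ t < n, ∀ ω, |d t ω| ≤ c)
    (hcond : ∀ t < n, P[d t | ℱ t] =ᵐ[P] 0) (l : ℝ) :
    ∀ m ≤ n, ∫ ω, exp (l * ∑ t ∈ Finset.range m, d t ω) ∂P ≤ (cosh (l*c))^m := by
  -- measurability of partial sums
  have hS : ∀ m ≤ n, Measurable[ℱ m] (fun ω => ∑ t ∈ Finset.range m, d t ω) := by
    intro m hm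
    apply Finset.measurable_sum
    intro t ht
    exact ((hmeas t (lt_of_lt_of_le (Finset.mem_range.1 ht) hm)).mono
      (hmono (Finset.mem_range.1 ht)) le_rfl)
  have hSbdd : ∀ m ≤ n, ∀ ω, |∑ t ∈ Finset.range m, d t ω| ≤ m * c := by
    intro m hm ω
    calc |∑ t ∈ Finset.range m, d t ω| ≤ ∑ t ∈ Finset.range m, |d t ω| :=
          Finset.abs_sum_le_sum_abs _ _
      _ ≤ ∑ t ∈ Finset.range m, c := Finset.sum_le_sum fun t ht =>
          hbdd t (lt_of_lt_of_le (Finset.mem_range.1 ht) hm) ω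
      _ = m * c := by simp [mul_comm]
  intro m hm
  induction m with
  | zero => simp
  | succ m ih =>
    have hmn : m < n := lt_of_lt_of_le (Nat.lt_succ_self m) hm
    have hmn' : m ≤ n := hmn.le
    set S : Ω → ℝ := fun ω => ∑ t ∈ Finset.range m, d t ω with hSdef
    set E : Ω → ℝ := fun ω => exp (l * S ω) with hEdef
    have hEm : Measurable[ℱ m] E :=
      Real.measurable_exp.comp ((hS m hmn').const_mul l)
    have hEm0 : Measurable E := hEm.mono (hle m) le_rfl
    have hEb : ∀ ω, |E ω| ≤ exp (|l| * (m * c)) := by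
      intro ω
      rw [abs_of_nonneg (exp_nonneg _), exp_le_exp]
      calc l * S ω ≤ |l * S ω| := le_abs_self _
        _ = |l| * |S ω| := abs_mul _ _
        _ ≤ |l| * (m * c) := by
            apply mul_le_mul_of_nonneg_left (hSbdd m hmn' ω) (abs_nonneg l)
    have hdm : Measurable (d m) := (hmeas m hmn).mono (hle (m+1)) le_rfl
    have hEint : Integrable E P := my_int_of_bdd P hEm0 hEb
    have hEdint : Integrable (fun ω => E ω * d m ω) P := by
      apply my_int_of_bdd P (hEm0.mul hdm) (C := exp (|l| * (m * c)) * c)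
      intro ω
      rw [Pi.mul_apply, abs_mul]
      exact mul_le_mul (hEb ω) (hbdd m hmn ω) (abs_nonneg _) (exp_nonneg _)
    -- key: ∫ E * d m = 0
    have hzero : ∫ ω, E ω * d m ω ∂P = 0 := by
      have hpull := condExp_mul_of_stronglyMeasurable_left (m := ℱ m) (μ := P)
        hEm.stronglyMeasurable (by exact hEdint) (my_int_of_bdd P hdm (fun ω => hbdd m hmn ω))
      have h1 : ∫ ω, E ω * d m ω ∂P = ∫ ω, (P[E * d m | ℱ m]) ω ∂P := by
        exact (integral_condExp (hle m) (f := E * d m)).symm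
      rw [h1]
      have h2 : P[E * d m | ℱ m] =ᵐ[P] 0 := by
        refine hpull.trans ?_
        filter_upwards [hcond m hmn] with ω hω
        simp [hω]
      rw [integral_congr_ae h2]
      simp
    -- pointwise chord bound
    have hchord : ∀ ω, exp (l * ∑ t ∈ Finset.range (m+1), d t ω) ≤
        cosh (l*c) * E ω + (sinh (l*c) / c) * (E ω * d m ω) := by
      intro ω
      rw [Finset.sum_range_succ, mul_add, exp_add]
      have h := my_chord (l := l) hc (hbdd m hmn ω)
      calc exp (l * S ω) * exp (l * d m ω)
          ≤ exp (l * S ω) * (cosh (l*c) + (d m ω / c) * sinh (l*c)) := by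
            apply mul_le_mul_of_nonneg_left h (exp_nonneg _)
        _ = cosh (l*c) * E ω + (sinh (l*c) / c) * (E ω * d m ω) := by
            rw [hEdef]; ring
    have hrhs_int : Integrable (fun ω => cosh (l*c) * E ω +
        (sinh (l*c) / c) * (E ω * d m ω)) P :=
      (hEint.const_mul _).add (hEdint.const_mul _)
    have hlhs_int : Integrable (fun ω => exp (l * ∑ t ∈ Finset.range (m+1), d t ω)) P := by
      apply my_int_of_bdd P
      · exact Real.measurable_exp.comp
          ((((hS (m+1) hm).mono (hle (m+1)) le_rfl)).const_mul l)
      · intro ω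
        rw [abs_of_nonneg (exp_nonneg _), exp_le_exp]
        calc l * _ ≤ |l * _| := le_abs_self _
          _ = |l| * |∑ t ∈ Finset.range (m+1), d t ω| := abs_mul _ _
          _ ≤ |l| * ((m+1) * c) := by
              apply mul_le_mul_of_nonneg_left _ (abs_nonneg l)
              exact_mod_cast hSbdd (m+1) hm ω
    calc ∫ ω, exp (l * ∑ t ∈ Finset.range (m+1), d t ω) ∂P
        ≤ ∫ ω, (cosh (l*c) * E ω + (sinh (l*c) / c) * (E ω * d m ω)) ∂P :=
          integral_mono hlhs_int hrhs_int hchord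
      _ = cosh (l*c) * ∫ ω, E ω ∂P + (sinh (l*c) / c) * ∫ ω, E ω * d m ω ∂P := by
          rw [integral_add (hEint.const_mul _) (hEdint.const_mul _),
            integral_const_mul, integral_const_mul]
      _ = cosh (l*c) * ∫ ω, E ω ∂P := by rw [hzero]; ring
      _ ≤ cosh (l*c) * (cosh (l*c))^m := by
          apply mul_le_mul_of_nonneg_left (ih hmn') ((Real.cosh_pos (l*c)).le)
      _ = (cosh (l*c))^(m+1) := by ring


lemma my_azuma (ℱ : ℕ → MeasurableSpace Ω) (hmono : Monotone ℱ) (hle : ∀ t, ℱ t ≤ m0)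
    (n : ℕ) (hn : 0 < n) (d : ℕ → Ω → ℝ) (c : ℝ) (hc : 0 < c)
    (hmeas : ∀ t < n, Measurable[ℱ (t+1)] (d t))
    (hbdd : ∀ t < n, ∀ ω, |d t ω| ≤ c)
    (hcond : ∀ t < n, P[d t | ℱ t] =ᵐ[P] 0) (a : ℝ) (ha : 0 ≤ a) :
    (P {ω | a ≤ ∑ t ∈ Finset.range n, d t ω}).toReal ≤ exp (-(a^2) / (2*n*c^2)) := by
  have hn' : (0:ℝ) < n := Nat.cast_pos.2 hn
  set l : ℝ := a / (n * c^2) with hldef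
  have hl : 0 ≤ l := by positivity
  set X : Ω → ℝ := fun ω => ∑ t ∈ Finset.range n, d t ω with hXdef
  have hXmeas : Measurable X := Finset.measurable_sum _ fun t ht =>
    ((hmeas t (Finset.mem_range.1 ht)).mono (hle (t+1)) le_rfl)
  have hXbdd : ∀ ω, |X ω| ≤ n * c := by
    intro ω
    calc |X ω| ≤ ∑ t ∈ Finset.range n, |d t ω| := Finset.abs_sum_le_sum_abs _ _
      _ ≤ ∑ t ∈ Finset.range n, c :=
        Finset.sum_le_sum fun t ht => hbdd t (Finset.mem_range.1 ht) ω
      _ = n * c := by simp [mul_comm]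
  have hint : Integrable (fun ω => exp (l * X ω)) P := by
    apply my_int_of_bdd P (Real.measurable_exp.comp (hXmeas.const_mul l))
      (C := exp (|l| * (n * c)))
    intro ω
    show |exp (l * X ω)| ≤ _
    rw [abs_of_nonneg (exp_nonneg _), exp_le_exp]
    calc l * X ω ≤ |l * X ω| := le_abs_self _
      _ = |l| * |X ω| := abs_mul _ _
      _ ≤ |l| * (n * c) := mul_le_mul_of_nonneg_left (hXbdd ω) (abs_nonneg l)
  have hch := measure_ge_le_exp_mul_mgf (X := X) (μ := P) (t := l) a hl hint
  have hmgf : mgf X P l ≤ (cosh (l*c))^n :=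
    my_mgf_bound P ℱ hmono hle n d c hc hmeas hbdd hcond l n le_rfl
  have hcosh : (cosh (l*c))^n ≤ exp ((n:ℝ) * ((l*c)^2/2)) := by
    calc (cosh (l*c))^n ≤ (exp ((l*c)^2/2))^n :=
          pow_le_pow_left₀ (Real.cosh_pos _).le (Real.cosh_le_exp_half_sq _) n
      _ = exp ((n:ℝ)*((l*c)^2/2)) := (Real.exp_nat_mul _ n).symm
  calc (P {ω | a ≤ X ω}).toReal ≤ exp (-l * a) * mgf X P l := hch
    _ ≤ exp (-l * a) * exp ((n:ℝ) * ((l*c)^2/2)) := by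
        apply mul_le_mul_of_nonneg_left (hmgf.trans hcosh) (exp_nonneg _)
    _ = exp (-l * a + (n:ℝ) * ((l*c)^2/2)) := (Real.exp_add _ _).symm
    _ = exp (-(a^2) / (2*n*c^2)) := by
        congr 1
        rw [hldef]
        field_simp
        ring


lemma my_triple
    (N p n : ℕ) (hn : 1 ≤ n)
    (ε Lf : ℝ) (hε0 : 0 < ε) (hε1 : ε < 1 / 2) (hLf : 0 < Lf)
    (f : ℝ → ℝ) (hfd : Differentiable ℝ f)
    (hfr : ∀ u, f u ∈ Set.Icc ε (1 - ε)) (hf' : ∀ u, |deriv f u| ≤ Lf)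
    (ℱ : ℕ → MeasurableSpace Ω) (hmono : Monotone ℱ) (hle : ∀ t, ℱ t ≤ m0)
    (x : ℤ → Ω → Fin N → ℝ)
    (hx01 : ∀ t ∈ Finset.Icc (1 - (p : ℤ)) (n : ℤ), ∀ ω, ∀ i, x t ω i = 0 ∨ x t ω i = 1)
    (hxmeas0 : ∀ t : ℤ, t ≤ 0 → Measurable[ℱ 0] (x t))
    (hxmeas : ∀ t : ℤ, 1 ≤ t → t ≤ (n : ℤ) → Measurable[ℱ t.toNat] (x t))
    (Θs : Fin N → Fin N → Fin p → ℝ)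
    (z : ℤ → Fin N → Ω → ℝ)
    (hz : ∀ t i ω,
      z t i ω = f (∑ j : Fin N, ∑ ℓ : Fin p, Θs i j ℓ * x (t - ((ℓ : ℕ) : ℤ) - 1) ω j))
    (hcond : ∀ t : ℤ, 1 ≤ t → t ≤ (n : ℤ) → ∀ i : Fin N,
      P[(fun ω => x t ω i)|ℱ (t.toNat - 1)] =ᵐ[P] z t i)
    (i j : Fin N) (ℓ : Fin p) (a : ℝ) (ha : 0 ≤ a) :
    P {ω | a ≤ |∑ t ∈ Finset.Icc (1 : ℤ) (n : ℤ),
        ((1 - x t ω i) / (1 - z t i ω) - x t ω i / z t i ω) *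
          deriv f (∑ j' : Fin N, ∑ ℓ' : Fin p,
            Θs i j' ℓ' * x (t - ((ℓ' : ℕ) : ℤ) - 1) ω j') *
          x (t - ((ℓ : ℕ) : ℤ) - 1) ω j|} ≤
      ENNReal.ofReal (2 * Real.exp (-(a^2) / (2*(n:ℝ)*(Lf/ε)^2))) := by
  have hε1' : ε < 1 := by linarith
  set c : ℝ := Lf / ε with hcdef
  have hc : 0 < c := div_pos hLf hε0
  -- the martingale differences, indexed by ℕ
  set D : ℕ → Ω → ℝ := fun t ω =>
    ((1 - x ((t:ℤ)+1) ω i) / (1 - z ((t:ℤ)+1) i ω) - x ((t:ℤ)+1) ω i / z ((t:ℤ)+1) i ω) *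
      deriv f (∑ j' : Fin N, ∑ ℓ' : Fin p,
        Θs i j' ℓ' * x (((t:ℤ)+1) - ((ℓ' : ℕ) : ℤ) - 1) ω j') *
      x (((t:ℤ)+1) - ((ℓ : ℕ) : ℤ) - 1) ω j with hDdef
  -- rewriting the sum
  have hsum : ∀ ω, (∑ t ∈ Finset.Icc (1 : ℤ) (n : ℤ),
      ((1 - x t ω i) / (1 - z t i ω) - x t ω i / z t i ω) *
        deriv f (∑ j' : Fin N, ∑ ℓ' : Fin p,
          Θs i j' ℓ' * x (t - ((ℓ' : ℕ) : ℤ) - 1) ω j') *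
        x (t - ((ℓ : ℕ) : ℤ) - 1) ω j) = ∑ t ∈ Finset.range n, D t ω := by
    intro ω; exact my_reindex n _
  -- measurability of coordinates w.r.t. the filtration
  have hxm : ∀ (r : ℤ), r ≤ (n:ℤ) → ∀ (k : ℕ), r ≤ (k:ℤ) → ∀ jj : Fin N,
      Measurable[ℱ k] (fun ω => x r ω jj) := by
    intro r hrn k hrk jj
    rcases le_or_gt r 0 with h0 | h1
    · exact ((measurable_pi_apply jj).comp (hxmeas0 r h0)).mono (hmono (Nat.zero_le k)) le_rfl
    · exact ((measurable_pi_apply jj).comp (hxmeas r h1 hrn)).mono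
        (hmono (by omega : r.toNat ≤ k)) le_rfl
  -- x values are 0 or 1 at relevant times
  have hx01' : ∀ (r : ℤ), 1 - (p:ℤ) ≤ r → r ≤ (n:ℤ) → ∀ ω jj,
      x r ω jj = 0 ∨ x r ω jj = 1 := fun r h1 h2 ω jj =>
    hx01 r (Finset.mem_Icc.2 ⟨h1, h2⟩) ω jj
  have hxabs : ∀ (r : ℤ), 1 - (p:ℤ) ≤ r → r ≤ (n:ℤ) → ∀ ω jj, |x r ω jj| ≤ 1 := by
    intro r h1 h2 ω jj
    rcases hx01' r h1 h2 ω jj with h | h <;> rw [h] <;> norm_num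
  -- z bounds
  have hzb : ∀ (s : ℤ) (ω : Ω), ε ≤ z s i ω ∧ z s i ω ≤ 1 - ε := by
    intro s ω; rw [hz]; exact ⟨(hfr _).1, (hfr _).2⟩
  have hz0 : ∀ (s : ℤ) (ω : Ω), z s i ω ≠ 0 := fun s ω => by
    have := (hzb s ω).1; intro h; rw [h] at this; linarith
  have hz1 : ∀ (s : ℤ) (ω : Ω), 1 - z s i ω ≠ 0 := fun s ω => by
    have := (hzb s ω).2; intro h; nlinarith [hε0]
  -- per-step facts
  have hDmeas : ∀ t < n, Measurable[ℱ (t+1)] (D t) := by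
    intro t ht
    have hU : Measurable[ℱ t] (fun ω => ∑ j' : Fin N, ∑ ℓ' : Fin p,
        Θs i j' ℓ' * x (((t:ℤ)+1) - ((ℓ' : ℕ) : ℤ) - 1) ω j') := by
      apply Finset.measurable_sum
      intro j' _
      apply Finset.measurable_sum
      intro ℓ' _
      exact (hxm _ (by omega) t (by omega) j').const_mul _
    have hZ : Measurable[ℱ t] (z ((t:ℤ)+1) i) := by
      have : z ((t:ℤ)+1) i = fun ω => f (∑ j' : Fin N, ∑ ℓ' : Fin p,
          Θs i j' ℓ' * x (((t:ℤ)+1) - ((ℓ' : ℕ) : ℤ) - 1) ω j') :=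
        funext fun ω => hz _ i ω
      rw [this]
      exact hfd.continuous.measurable.comp hU
    have hXi : Measurable[ℱ (t+1)] (fun ω => x ((t:ℤ)+1) ω i) := by
      have := hxm ((t:ℤ)+1) (by omega) (t+1) (by omega) i
      exact this
    have hXP : Measurable[ℱ t] (fun ω => x (((t:ℤ)+1) - ((ℓ : ℕ) : ℤ) - 1) ω j) :=
      hxm _ (by omega) t (by omega) j
    have hdf : Measurable[ℱ t] (fun ω => deriv f (∑ j' : Fin N, ∑ ℓ' : Fin p,
        Θs i j' ℓ' * x (((t:ℤ)+1) - ((ℓ' : ℕ) : ℤ) - 1) ω j')) :=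
      (measurable_deriv f).comp hU
    have hmono' : ℱ t ≤ ℱ (t+1) := hmono (Nat.le_succ t)
    exact ((((measurable_const.sub hXi).div
      (measurable_const.sub (hZ.mono hmono' le_rfl))).sub
      (hXi.div (hZ.mono hmono' le_rfl))).mul (hdf.mono hmono' le_rfl)).mul
      (hXP.mono hmono' le_rfl)
  have hDbdd : ∀ t < n, ∀ ω, |D t ω| ≤ c := by
    intro t ht ω
    have hB : |(1 - x ((t:ℤ)+1) ω i) / (1 - z ((t:ℤ)+1) i ω) -
        x ((t:ℤ)+1) ω i / z ((t:ℤ)+1) i ω| ≤ 1/ε := by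
      have hzb1 := (hzb ((t:ℤ)+1) ω).1
      have hzb2 := (hzb ((t:ℤ)+1) ω).2
      have hpos1 : (0:ℝ) < 1 - z ((t:ℤ)+1) i ω := by linarith
      have hpos2 : (0:ℝ) < z ((t:ℤ)+1) i ω := lt_of_lt_of_le hε0 hzb1
      rcases hx01' ((t:ℤ)+1) (by omega) (by omega) ω i with h | h <;> rw [h]
      · rw [sub_zero, zero_div, sub_zero,
          abs_of_nonneg (le_of_lt (div_pos one_pos hpos1))]
        rw [div_le_div_iff₀ hpos1 hε0]
        linarith
      · rw [sub_self, zero_div, zero_sub, abs_neg,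
          abs_of_nonneg (le_of_lt (div_pos one_pos hpos2))]
        rw [div_le_div_iff₀ hpos2 hε0]
        linarith
    calc |D t ω| = |(1 - x ((t:ℤ)+1) ω i) / (1 - z ((t:ℤ)+1) i ω) -
          x ((t:ℤ)+1) ω i / z ((t:ℤ)+1) i ω| *
          |deriv f (∑ j' : Fin N, ∑ ℓ' : Fin p,
            Θs i j' ℓ' * x (((t:ℤ)+1) - ((ℓ' : ℕ) : ℤ) - 1) ω j')| *
          |x (((t:ℤ)+1) - ((ℓ : ℕ) : ℤ) - 1) ω j| := by
          rw [hDdef]; rw [abs_mul, abs_mul]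
      _ ≤ (1/ε) * Lf * 1 := by
          apply mul_le_mul _ (hxabs _ (by omega) (by omega) ω j) (abs_nonneg _)
            (by positivity)
          exact mul_le_mul hB (hf' _) (abs_nonneg _) (by positivity)
      _ = c := by rw [hcdef]; ring
  have hDcond : ∀ t < n, P[D t | ℱ t] =ᵐ[P] 0 := by
    intro t ht
    set A : Ω → ℝ := fun ω => deriv f (∑ j' : Fin N, ∑ ℓ' : Fin p,
        Θs i j' ℓ' * x (((t:ℤ)+1) - ((ℓ' : ℕ) : ℤ) - 1) ω j') *
        x (((t:ℤ)+1) - ((ℓ : ℕ) : ℤ) - 1) ω j with hAdef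
    set Z : Ω → ℝ := z ((t:ℤ)+1) i with hZdef
    set C : Ω → ℝ := fun ω => A ω / (1 - Z ω) with hCdef
    set K : Ω → ℝ := fun ω => A ω * (1/(1 - Z ω) + 1/(Z ω)) with hKdef
    set Xi : Ω → ℝ := fun ω => x ((t:ℤ)+1) ω i with hXidef
    -- measurability (as above)
    have hU : Measurable[ℱ t] (fun ω => ∑ j' : Fin N, ∑ ℓ' : Fin p,
        Θs i j' ℓ' * x (((t:ℤ)+1) - ((ℓ' : ℕ) : ℤ) - 1) ω j') := by
      apply Finset.measurable_sum; intro j' _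
      apply Finset.measurable_sum; intro ℓ' _
      exact (hxm _ (by omega) t (by omega) j').const_mul _
    have hZm : Measurable[ℱ t] Z := by
      have : Z = fun ω => f (∑ j' : Fin N, ∑ ℓ' : Fin p,
          Θs i j' ℓ' * x (((t:ℤ)+1) - ((ℓ' : ℕ) : ℤ) - 1) ω j') :=
        funext fun ω => hz _ i ω
      rw [this]; exact hfd.continuous.measurable.comp hU
    have hAm : Measurable[ℱ t] A :=
      ((measurable_deriv f).comp hU).mul (hxm _ (by omega) t (by omega) j)
    have hCm : Measurable[ℱ t] C := hAm.div (measurable_const.sub hZm)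
    have hKm : Measurable[ℱ t] K :=
      hAm.mul ((measurable_const.div (measurable_const.sub hZm)).add
        (measurable_const.div hZm))
    have hXim : Measurable (fun ω => x ((t:ℤ)+1) ω i) :=
      (hxm ((t:ℤ)+1) (by omega) (t+1) (by omega) i).mono (hle (t+1)) le_rfl
    -- bounds
    have hAb : ∀ ω, |A ω| ≤ Lf := by
      intro ω
      rw [hAdef, abs_mul]
      calc |deriv f _| * |x _ ω j| ≤ Lf * 1 :=
        mul_le_mul (hf' _) (hxabs _ (by omega) (by omega) ω j) (abs_nonneg _) hLf.le
        _ = Lf := mul_one Lf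
    have hzb1 : ∀ ω, ε ≤ Z ω := fun ω => (hzb _ ω).1
    have hzb2 : ∀ ω, Z ω ≤ 1 - ε := fun ω => (hzb _ ω).2
    have hinvb : ∀ ω, |1/(1 - Z ω) + 1/(Z ω)| ≤ 2/ε := by
      intro ω
      have h1 : (0:ℝ) < 1 - Z ω := by have := hzb2 ω; linarith
      have h2 : (0:ℝ) < Z ω := lt_of_lt_of_le hε0 (hzb1 ω)
      rw [abs_of_nonneg (by positivity)]
      have e1 : 1/(1 - Z ω) ≤ 1/ε := by
        rw [div_le_div_iff₀ h1 hε0]; have := hzb2 ω; linarith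
      have e2 : 1/(Z ω) ≤ 1/ε := by
        rw [div_le_div_iff₀ h2 hε0]; have := hzb1 ω; linarith
      calc 1/(1 - Z ω) + 1/(Z ω) ≤ 1/ε + 1/ε := add_le_add e1 e2
        _ = 2/ε := by ring
    have hCb : ∀ ω, |C ω| ≤ Lf/ε := by
      intro ω
      rw [hCdef]
      have h1 : (0:ℝ) < 1 - Z ω := by have := hzb2 ω; linarith
      rw [abs_div, abs_of_nonneg h1.le, div_le_div_iff₀ h1 hε0]
      calc |A ω| * ε ≤ Lf * ε := mul_le_mul_of_nonneg_right (hAb ω) hε0.le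
        _ ≤ Lf * (1 - Z ω) := by
            apply mul_le_mul_of_nonneg_left _ hLf.le
            have := hzb2 ω; linarith
    have hKb : ∀ ω, |K ω| ≤ Lf * (2/ε) := by
      intro ω
      rw [hKdef, abs_mul]
      exact mul_le_mul (hAb ω) (hinvb ω) (abs_nonneg _) hLf.le
    have hXib : ∀ ω, |Xi ω| ≤ 1 := fun ω => hxabs _ (by omega) (by omega) ω i
    -- integrability
    have hCint : Integrable C P := my_int_of_bdd P (hCm.mono (hle t) le_rfl) hCb
    have hXiint : Integrable Xi P := my_int_of_bdd P hXim hXib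
    have hKXint : Integrable (K * Xi) P := by
      apply my_int_of_bdd P (((hKm.mono (hle t) le_rfl)).mul hXim)
        (C := Lf * (2/ε) * 1)
      intro ω
      show |K ω * Xi ω| ≤ _
      rw [abs_mul]
      exact mul_le_mul (hKb ω) (hXib ω) (abs_nonneg _) (by positivity)
    -- pointwise identity D t = C - K * Xi
    have hDeq : D t = C - K * Xi := by
      funext ω
      show D t ω = C ω - K ω * Xi ω
      rw [hDdef, hCdef, hKdef, hAdef, hXidef, hZdef]
      have h0 := hz0 ((t:ℤ)+1) ω
      have h1 := hz1 ((t:ℤ)+1) ω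
      field_simp
      ring
    -- conditional expectation computation
    have hcond' : P[Xi | ℱ t] =ᵐ[P] Z := by
      have := hcond ((t:ℤ)+1) (by omega) (by omega) i
      have hidx : ((t:ℤ)+1).toNat - 1 = t := by omega
      rwa [hidx] at this
    have hsub : P[C - K * Xi | ℱ t] =ᵐ[P] P[C | ℱ t] - P[K * Xi | ℱ t] :=
      condExp_sub hCint hKXint (ℱ t)
    have hCid : P[C | ℱ t] = C :=
      condExp_of_stronglyMeasurable (hle t) hCm.stronglyMeasurable hCint
    have hmul : P[K * Xi | ℱ t] =ᵐ[P] K * P[Xi | ℱ t] :=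
      condExp_mul_of_stronglyMeasurable_left hKm.stronglyMeasurable hKXint hXiint
    rw [hDeq]
    refine hsub.trans ?_
    rw [hCid]
    have : C - K * P[Xi | ℱ t] =ᵐ[P] (0 : Ω → ℝ) := by
      filter_upwards [hcond'] with ω hω
      show C ω - K ω * (P[Xi | ℱ t]) ω = 0
      rw [hω]
      show C ω - K ω * Z ω = 0
      rw [hCdef, hKdef]
      have h0 := hz0 ((t:ℤ)+1) ω
      have h1 := hz1 ((t:ℤ)+1) ω
      show A ω / (1 - Z ω) - A ω * (1/(1 - Z ω) + 1/(Z ω)) * Z ω = 0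
      have h0' : Z ω ≠ 0 := h0
      have h1' : 1 - Z ω ≠ 0 := h1
      field_simp
      ring
    refine Filter.EventuallyEq.trans ?_ this
    filter_upwards [hmul] with ω hω
    show C ω - (P[K * Xi | ℱ t]) ω = C ω - K ω * (P[Xi | ℱ t]) ω
    rw [hω]
    rfl
  -- apply Azuma to D and -D
  have h1 := my_azuma P ℱ hmono hle n hn D c hc hDmeas hDbdd hDcond a ha
  have h2 := my_azuma P ℱ hmono hle n hn (fun t ω => -(D t ω)) c hc
    (fun t ht => (hDmeas t ht).neg)
    (fun t ht ω => by rw [abs_neg]; exact hDbdd t ht ω)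
    (fun t ht => by
      have := condExp_neg (μ := P) (m := ℱ t) (D t)
      refine this.trans ?_
      filter_upwards [hDcond t ht] with ω hω
      show -(P[D t | ℱ t]) ω = 0
      rw [hω]; simp) a ha
  -- combine
  have hsub : {ω | a ≤ |∑ t ∈ Finset.Icc (1 : ℤ) (n : ℤ),
        ((1 - x t ω i) / (1 - z t i ω) - x t ω i / z t i ω) *
          deriv f (∑ j' : Fin N, ∑ ℓ' : Fin p,
            Θs i j' ℓ' * x (t - ((ℓ' : ℕ) : ℤ) - 1) ω j') *
          x (t - ((ℓ : ℕ) : ℤ) - 1) ω j|} ⊆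
      {ω | a ≤ ∑ t ∈ Finset.range n, D t ω} ∪
      {ω | a ≤ ∑ t ∈ Finset.range n, -(D t ω)} := by
    intro ω hω
    simp only [Set.mem_setOf_eq] at hω
    rw [hsum ω] at hω
    rcases abs_le'.1 (le_refl |∑ t ∈ Finset.range n, D t ω|) with _
    rcases le_or_gt 0 (∑ t ∈ Finset.range n, D t ω) with hpos | hneg
    · left
      simp only [Set.mem_setOf_eq]
      rwa [abs_of_nonneg hpos] at hω
    · right
      simp only [Set.mem_setOf_eq, Finset.sum_neg_distrib]
      rwa [abs_of_neg hneg] at hω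
  have hfin1 : P {ω | a ≤ ∑ t ∈ Finset.range n, D t ω} ≤
      ENNReal.ofReal (Real.exp (-(a^2) / (2*(n:ℝ)*c^2))) := by
    rw [← ENNReal.le_ofReal_iff_toReal_le (measure_ne_top P _) (exp_nonneg _)] at h1
    exact h1
  have hfin2 : P {ω | a ≤ ∑ t ∈ Finset.range n, -(D t ω)} ≤
      ENNReal.ofReal (Real.exp (-(a^2) / (2*(n:ℝ)*c^2))) := by
    rw [← ENNReal.le_ofReal_iff_toReal_le (measure_ne_top P _) (exp_nonneg _)] at h2
    exact h2
  calc P _ ≤ P ({ω | a ≤ ∑ t ∈ Finset.range n, D t ω} ∪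
        {ω | a ≤ ∑ t ∈ Finset.range n, -(D t ω)}) := measure_mono hsub
    _ ≤ P {ω | a ≤ ∑ t ∈ Finset.range n, D t ω} +
        P {ω | a ≤ ∑ t ∈ Finset.range n, -(D t ω)} := measure_union_le _ _
    _ ≤ ENNReal.ofReal (Real.exp (-(a^2) / (2*(n:ℝ)*c^2))) +
        ENNReal.ofReal (Real.exp (-(a^2) / (2*(n:ℝ)*c^2))) := add_le_add hfin1 hfin2
    _ = ENNReal.ofReal (2 * Real.exp (-(a^2) / (2*(n:ℝ)*(Lf/ε)^2))) := by
        rw [← ENNReal.ofReal_add (exp_nonneg _) (exp_nonneg _), hcdef]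
        congr 1
        ring


lemma my_stmt14
    (N p n : ℕ) (hN : 1 ≤ N) (hp : 1 ≤ p) (hn : 1 ≤ n) (hNp : 2 ≤ N ^ 2 * p)
    (ε Lf : ℝ) (hε0 : 0 < ε) (hε1 : ε < 1 / 2) (hLf : 0 < Lf)
    (f : ℝ → ℝ) (hfd : Differentiable ℝ f)
    (hfr : ∀ u, f u ∈ Set.Icc ε (1 - ε)) (hf' : ∀ u, |deriv f u| ≤ Lf)
    (ℱ : ℕ → MeasurableSpace Ω) (hmono : Monotone ℱ) (hle : ∀ t, ℱ t ≤ m0)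
    (x : ℤ → Ω → Fin N → ℝ)
    (hx01 : ∀ t ∈ Finset.Icc (1 - (p : ℤ)) (n : ℤ), ∀ ω, ∀ i, x t ω i = 0 ∨ x t ω i = 1)
    (hxmeas0 : ∀ t : ℤ, t ≤ 0 → Measurable[ℱ 0] (x t))
    (hxmeas : ∀ t : ℤ, 1 ≤ t → t ≤ (n : ℤ) → Measurable[ℱ t.toNat] (x t))
    (Θs : Fin N → Fin N → Fin p → ℝ)
    (z : ℤ → Fin N → Ω → ℝ)
    (hz : ∀ t i ω,
      z t i ω = f (∑ j : Fin N, ∑ ℓ : Fin p, Θs i j ℓ * x (t - ((ℓ : ℕ) : ℤ) - 1) ω j))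
    (hcond : ∀ t : ℤ, 1 ≤ t → t ≤ (n : ℤ) → ∀ i : Fin N,
      P[(fun ω => x t ω i)|ℱ (t.toNat - 1)] =ᵐ[P] z t i)
    (c₁ : ℝ) (hc₁ : 2 < c₁) :
    ENNReal.ofReal (1 - 2 * ((N : ℝ) ^ 2 * (p : ℝ)) ^ (-(c₁ / 2 - 1))) ≤
      P {ω | ∀ (i j : Fin N) (ℓ : Fin p),
        |(1 / (n : ℝ)) * ∑ t ∈ Finset.Icc (1 : ℤ) (n : ℤ),
            ((1 - x t ω i) / (1 - z t i ω) - x t ω i / z t i ω) *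
              deriv f (∑ j' : Fin N, ∑ ℓ' : Fin p,
                Θs i j' ℓ' * x (t - ((ℓ' : ℕ) : ℤ) - 1) ω j') *
              x (t - ((ℓ : ℕ) : ℤ) - 1) ω j| ≤
          (Lf / ε) * Real.sqrt (c₁ * Real.log ((N : ℝ) ^ 2 * (p : ℝ)) / (n : ℝ))} := by
  have hn' : (0:ℝ) < n := by exact_mod_cast hn
  have hNp' : (2:ℝ) ≤ (N:ℝ)^2 * p := by exact_mod_cast hNp
  have hNppos : (0:ℝ) < (N:ℝ)^2 * p := by linarith
  set L : ℝ := Real.log ((N:ℝ)^2 * (p:ℝ)) with hLdef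
  have hL : 0 ≤ L := Real.log_nonneg (by linarith)
  set c : ℝ := Lf / ε with hcdef
  have hc : 0 < c := div_pos hLf hε0
  set b : ℝ := c * Real.sqrt (c₁ * L / n) with hbdef
  have hb : 0 ≤ b := mul_nonneg hc.le (Real.sqrt_nonneg _)
  set a : ℝ := n * b with hadef
  have ha : 0 ≤ a := mul_nonneg hn'.le hb
  -- exponent computation
  have hexp : -(a^2) / (2*(n:ℝ)*c^2) = -(c₁ * L / 2) := by
    have hsq : (Real.sqrt (c₁ * L / n))^2 = c₁ * L / n :=
      Real.sq_sqrt (by positivity)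
    have ha2 : a^2 = (n:ℝ) * c^2 * (c₁ * L) := by
      rw [hadef, hbdef, mul_pow, mul_pow, hsq]
      field_simp
    rw [ha2]
    have hcne : c ≠ 0 := hc.ne'
    have hnne : (n:ℝ) ≠ 0 := hn'.ne'
    field_simp
  -- per-triple bound
  have htriple : ∀ (i j : Fin N) (ℓ : Fin p),
      P {ω | a ≤ |∑ t ∈ Finset.Icc (1 : ℤ) (n : ℤ),
        ((1 - x t ω i) / (1 - z t i ω) - x t ω i / z t i ω) *
          deriv f (∑ j' : Fin N, ∑ ℓ' : Fin p,
            Θs i j' ℓ' * x (t - ((ℓ' : ℕ) : ℤ) - 1) ω j') *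
          x (t - ((ℓ : ℕ) : ℤ) - 1) ω j|} ≤
      ENNReal.ofReal (2 * Real.exp (-(c₁ * L / 2))) := by
    intro i j ℓ
    have := my_triple P N p n hn ε Lf hε0 hε1 hLf f hfd hfr hf' ℱ hmono hle x hx01
      hxmeas0 hxmeas Θs z hz hcond i j ℓ a ha
    rwa [← hcdef, hexp] at this
  -- abbreviate
  set S : Fin N → Fin N → Fin p → Ω → ℝ := fun i j ℓ ω =>
    ∑ t ∈ Finset.Icc (1 : ℤ) (n : ℤ),
      ((1 - x t ω i) / (1 - z t i ω) - x t ω i / z t i ω) *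
        deriv f (∑ j' : Fin N, ∑ ℓ' : Fin p,
          Θs i j' ℓ' * x (t - ((ℓ' : ℕ) : ℤ) - 1) ω j') *
        x (t - ((ℓ : ℕ) : ℤ) - 1) ω j with hSdef
  have htriple2 : ∀ (i j : Fin N) (ℓ : Fin p),
      P {ω | a ≤ |S i j ℓ ω|} ≤ ENNReal.ofReal (2 * Real.exp (-(c₁ * L / 2))) :=
    htriple
  set β : ℝ := 2 * ((N:ℝ)^2 * (p:ℝ)) ^ (-(c₁/2 - 1)) with hβdef
  have hβ : 0 ≤ β := by positivity
  set good : Set Ω := {ω | ∀ (i j : Fin N) (ℓ : Fin p),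
      |(1 / (n : ℝ)) * S i j ℓ ω| ≤ b} with hgooddef
  have hcover : goodᶜ ⊆
      ⋃ k : Fin N × Fin N × Fin p, {ω | a ≤ |S k.1 k.2.1 k.2.2 ω|} := by
    intro ω hω
    simp only [hgooddef, Set.mem_compl_iff, Set.mem_setOf_eq, not_forall] at hω
    obtain ⟨i, j, ℓ, hb'⟩ := hω
    push_neg at hb'
    refine Set.mem_iUnion.2 ⟨(i, j, ℓ), ?_⟩
    simp only [Set.mem_setOf_eq]
    have habs : |(1 / (n:ℝ)) * S i j ℓ ω| = (1/(n:ℝ)) * |S i j ℓ ω| := by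
      rw [abs_mul, abs_of_nonneg (by positivity : (0:ℝ) ≤ 1/(n:ℝ))]
    rw [habs] at hb'
    have : (n:ℝ) * b < |S i j ℓ ω| := by
      have h := mul_lt_mul_of_pos_left hb' hn'
      have h2 : (n:ℝ) * ((1/(n:ℝ)) * |S i j ℓ ω|) = |S i j ℓ ω| := by
        field_simp
      rw [h2] at h
      exact h
    rw [hadef]
    exact this.le
  have hbad : P (⋃ k : Fin N × Fin N × Fin p, {ω | a ≤ |S k.1 k.2.1 k.2.2 ω|}) ≤
      ENNReal.ofReal β := by
    calc P (⋃ k : Fin N × Fin N × Fin p, {ω | a ≤ |S k.1 k.2.1 k.2.2 ω|})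
        ≤ ∑' k : Fin N × Fin N × Fin p, P {ω | a ≤ |S k.1 k.2.1 k.2.2 ω|} :=
          measure_iUnion_le _
      _ ≤ ∑' _k : Fin N × Fin N × Fin p,
          ENNReal.ofReal (2 * Real.exp (-(c₁ * L / 2))) :=
          ENNReal.tsum_le_tsum (fun k => htriple2 k.1 k.2.1 k.2.2)
      _ = (Fintype.card (Fin N × Fin N × Fin p)) *
          ENNReal.ofReal (2 * Real.exp (-(c₁ * L / 2))) := by
          rw [tsum_fintype, Finset.sum_const, Finset.card_univ, nsmul_eq_mul]
      _ = ENNReal.ofReal (((N * N * p : ℕ) : ℝ) * (2 * Real.exp (-(c₁ * L / 2)))) := by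
          rw [ENNReal.ofReal_mul (by positivity : (0:ℝ) ≤ ((N*N*p : ℕ):ℝ)),
            ENNReal.ofReal_natCast]
          congr 2
          simp only [Fintype.card_prod, Fintype.card_fin]
          ring
      _ = ENNReal.ofReal β := by
          congr 1
          have hcast : ((N * N * p : ℕ) : ℝ) = (N:ℝ)^2 * (p:ℝ) := by push_cast; ring
          have h1 : ((N:ℝ)^2*(p:ℝ)) ^ (-(c₁/2-1)) = Real.exp (L * (-(c₁/2-1))) :=
            Real.rpow_def_of_pos hNppos _
          have h2 : (N:ℝ)^2*(p:ℝ) = Real.exp L := (Real.exp_log hNppos).symm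
          rw [hβdef, h1, hcast, h2]
          have h3 : Real.exp L * (2 * Real.exp (-(c₁ * L / 2))) =
              2 * Real.exp (L + -(c₁*L/2)) := by rw [Real.exp_add]; ring
          rw [h3]
          congr 1
          ring
  have hfinal : ENNReal.ofReal (1 - β) ≤ P good := by
    rw [ENNReal.ofReal_sub 1 hβ, ENNReal.ofReal_one]
    refine tsub_le_iff_right.2 ?_
    calc (1:ℝ≥0∞) = P Set.univ := measure_univ.symm
      _ = P (good ∪ goodᶜ) := by rw [Set.union_compl_self]
      _ ≤ P good + P goodᶜ := measure_union_le _ _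
      _ ≤ P good + ENNReal.ofReal β :=
          add_le_add le_rfl (le_trans (measure_mono hcover) hbad)
  exact hfinal


end




/-- with probability at least `1 − 2(N²p)^{−(c₁/2−1)}`, every entry of
the gradient of the negative log-likelihood at the true parameter `Θ*` is at most
`(L_f/ε)·√(c₁ log(N²p)/n)` in absolute value. -/
theorem stmt14 {Ω : Type*} [m0 : MeasurableSpace Ω] (P : Measure Ω)
    [IsProbabilityMeasure P]
    (N p n : ℕ) (hN : 1 ≤ N) (hp : 1 ≤ p) (hn : 1 ≤ n) (hNp : 2 ≤ N ^ 2 * p)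
    (ε Lf : ℝ) (hε0 : 0 < ε) (hε1 : ε < 1 / 2) (hLf : 0 < Lf)
    (f : ℝ → ℝ) (hfd : Differentiable ℝ f)
    (hfr : ∀ u, f u ∈ Set.Icc ε (1 - ε)) (hf' : ∀ u, |deriv f u| ≤ Lf)
    (ℱ : ℕ → MeasurableSpace Ω) (hmono : Monotone ℱ) (hle : ∀ t, ℱ t ≤ m0)
    (x : ℤ → Ω → Fin N → ℝ)
    (hx01 : ∀ t ∈ Finset.Icc (1 - (p : ℤ)) (n : ℤ), ∀ ω, ∀ i, x t ω i = 0 ∨ x t ω i = 1)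
    (hxmeas0 : ∀ t : ℤ, t ≤ 0 → Measurable[ℱ 0] (x t))
    (hxmeas : ∀ t : ℤ, 1 ≤ t → t ≤ (n : ℤ) → Measurable[ℱ t.toNat] (x t))
    (Θs : Fin N → Fin N → Fin p → ℝ)
    (z : ℤ → Fin N → Ω → ℝ)
    (hz : ∀ t i ω,
      z t i ω = f (∑ j : Fin N, ∑ ℓ : Fin p, Θs i j ℓ * x (t - ((ℓ : ℕ) : ℤ) - 1) ω j))
    (hcond : ∀ t : ℤ, 1 ≤ t → t ≤ (n : ℤ) → ∀ i : Fin N,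
      P[(fun ω => x t ω i)|ℱ (t.toNat - 1)] =ᵐ[P] z t i)
    (c₁ : ℝ) (hc₁ : 2 < c₁) :
    ENNReal.ofReal (1 - 2 * ((N : ℝ) ^ 2 * (p : ℝ)) ^ (-(c₁ / 2 - 1))) ≤
      P {ω | ∀ (i j : Fin N) (ℓ : Fin p),
        |(1 / (n : ℝ)) * ∑ t ∈ Finset.Icc (1 : ℤ) (n : ℤ),
            ((1 - x t ω i) / (1 - z t i ω) - x t ω i / z t i ω) *
              deriv f (∑ j' : Fin N, ∑ ℓ' : Fin p,
                Θs i j' ℓ' * x (t - ((ℓ' : ℕ) : ℤ) - 1) ω j') *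
              x (t - ((ℓ : ℕ) : ℤ) - 1) ω j| ≤
          (Lf / ε) * Real.sqrt (c₁ * Real.log ((N : ℝ) ^ 2 * (p : ℝ)) / (n : ℝ))} := by
  exact my_stmt14 P N p n hN hp hn hNp ε Lf hε0 hε1 hLf f hfd hfr hf' ℱ hmono hle x hx01
    hxmeas0 hxmeas Θs z hz hcond c₁ hc₁
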